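/- With the trumpet setup below, there exists α₁ > ０ such that for every α ≥ α₁ and every r > 0 one has u_α(r) + (2/(n−2))·r·w(r) > 0. -/

import Mathlib

open MeasureTheory

noncomputable def u1' (n : ℕ) (s : ℝ) : ℝ := ((2 - (n : ℝ)) / 2) * s ^ (-(n : ℝ) / 2)

noncomputable def u2' (n : ℕ) (s : ℝ) : ℝ := (2 - (n : ℝ)) * s ^ (1 - (n : ℝ))

noncomputable def w (n : ℕ) (ζ : ℝ → ℝ) (s : ℝ) : ℝ :=
  ζ s * u1' n s + (1 - ζ s) * u2' n s

noncomputable def uA (n : ℕ) (ζ : ℝ → ℝ) (r₀ α r : ℝ) : ℝ :=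
  α + r₀ ^ ((2 - (n : ℝ)) / 2) - ∫ s in Set.Ioi r, w n ζ s

theorem stmt_18 (n : ℕ) (hn : 3 ≤ n) (r₀ : ℝ) (hr₀ : 0 < r₀)
    (hr₀2 : 2 * r₀ < (2 : ℝ) ^ ((2 : ℝ) / ((n : ℝ) - 2)))
    (ζ : ℝ → ℝ) (hζC : ContDiff ℝ 1 ζ) (hζ01 : ∀ r : ℝ, 0 ≤ ζ r ∧ ζ r ≤ 1)
    (hζone : ∀ r : ℝ, r ≤ r₀ → ζ r = 1) (hζzero : ∀ r : ℝ, 2 * r₀ ≤ r → ζ r = 0)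
    (hζder : ∀ r : ℝ, deriv ζ r ≤ 0) :
    ∃ α₁ : ℝ, 0 < α₁ ∧ ∀ α : ℝ, α₁ ≤ α → ∀ r : ℝ, 0 < r →
      uA n ζ r₀ α r + (2 / ((n : ℝ) - 2)) * r * w n ζ r > 0 := by
  have hn' : (3:ℝ) ≤ (n:ℝ) := by exact_mod_cast hn
  have hN2 : (0:ℝ) < (n:ℝ) - 2 := by linarith
  have hNne : (n:ℝ) - 2 ≠ 0 := ne_of_gt hN2
  -- pointwise sign facts
  have hu1 : ∀ s : ℝ, 0 < s → u1' n s ≤ 0 := by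
    intro s hs
    have h := Real.rpow_nonneg hs.le (-(n:ℝ)/2)
    unfold u1'; nlinarith
  have hu2 : ∀ s : ℝ, 0 < s → u2' n s ≤ 0 := by
    intro s hs
    have h := Real.rpow_nonneg hs.le (1-(n:ℝ))
    unfold u2'; nlinarith
  have hwle : ∀ s : ℝ, 0 < s → w n ζ s ≤ 0 := by
    intro s hs
    have h1 := hu1 s hs; have h2 := hu2 s hs
    obtain ⟨hz0, hz1⟩ := hζ01 s
    unfold w; nlinarith
  have hwge : ∀ s : ℝ, 0 < s → u1' n s + u2' n s ≤ w n ζ s := by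
    intro s hs
    have h1 := hu1 s hs; have h2 := hu2 s hs
    obtain ⟨hz0, hz1⟩ := hζ01 s
    unfold w; nlinarith
  -- integrability
  have hi1 : ∀ r : ℝ, 0 < r → IntegrableOn (u1' n) (Set.Ioi r) := by
    intro r hr
    have h : IntegrableOn (fun s : ℝ => s ^ (-(n:ℝ)/2)) (Set.Ioi r) :=
      integrableOn_Ioi_rpow_of_lt (by linarith) hr
    exact h.const_mul _
  have hi2 : ∀ r : ℝ, 0 < r → IntegrableOn (u2' n) (Set.Ioi r) := by
    intro r hr
    have h : IntegrableOn (fun s : ℝ => s ^ (1-(n:ℝ))) (Set.Ioi r) :=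
      integrableOn_Ioi_rpow_of_lt (by linarith) hr
    exact h.const_mul _
  have hwint : ∀ r : ℝ, 0 < r → IntegrableOn (w n ζ) (Set.Ioi r) := by
    intro r hr
    have hz : AEStronglyMeasurable ζ (volume.restrict (Set.Ioi r)) :=
      hζC.continuous.aestronglyMeasurable.restrict
    have hz' : AEStronglyMeasurable (fun s => 1 - ζ s) (volume.restrict (Set.Ioi r)) :=
      (continuous_const.sub hζC.continuous).aestronglyMeasurable.restrict
    have h1 : IntegrableOn (fun s => ζ s * u1' n s) (Set.Ioi r) :=
      Integrable.bdd_mul (hi1 r hr) hz (c := 1) (Filter.Eventually.of_forall fun s => by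
        rw [Real.norm_eq_abs, abs_le]
        constructor <;> linarith [(hζ01 s).1, (hζ01 s).2])
    have h2 : IntegrableOn (fun s => (1 - ζ s) * u2' n s) (Set.Ioi r) :=
      Integrable.bdd_mul (hi2 r hr) hz' (c := 1) (Filter.Eventually.of_forall fun s => by
        rw [Real.norm_eq_abs, abs_le]
        constructor <;> linarith [(hζ01 s).1, (hζ01 s).2])
    exact h1.add h2
  have hIle : ∀ r : ℝ, 0 < r → (∫ s in Set.Ioi r, w n ζ s) ≤ 0 := by
    intro r hr
    apply integral_nonpos_of_ae
    filter_upwards [ae_restrict_mem measurableSet_Ioi] with s hs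
    exact hwle s (hr.trans hs)
  -- split of the integral for r ≤ r₀
  have hsplit : ∀ r : ℝ, 0 < r → r ≤ r₀ →
      (∫ s in Set.Ioi r, w n ζ s)
        = (r₀ ^ ((2-(n:ℝ))/2) - r ^ ((2-(n:ℝ))/2)) + ∫ s in Set.Ioi r₀, w n ζ s := by
    intro r hr hrr
    have h1 : Set.Ioc r r₀ ∪ Set.Ioi r₀ = Set.Ioi r := Set.Ioc_union_Ioi_eq_Ioi hrr
    rw [← h1, setIntegral_union (Set.Ioc_disjoint_Ioi le_rfl) measurableSet_Ioi
      ((hwint r hr).mono_set Set.Ioc_subset_Ioi_self) (hwint r₀ hr₀)]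
    congr 1
    have e1 : ∫ s in Set.Ioc r r₀, w n ζ s = ∫ s in Set.Ioc r r₀, u1' n s := by
      apply setIntegral_congr_fun measurableSet_Ioc
      intro s hs
      simp [w, hζone s hs.2]
    have h0 : (0:ℝ) ∉ Set.uIcc r r₀ := by
      rw [Set.uIcc_of_le hrr]
      intro h; exact absurd h.1 (by linarith)
    have hne : -(n:ℝ)/2 ≠ -1 := by intro h; nlinarith [h]
    rw [e1, ← intervalIntegral.integral_of_le hrr]
    unfold u1'
    rw [intervalIntegral.integral_const_mul, integral_rpow (Or.inr ⟨hne, h0⟩)]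
    have he : -(n:ℝ)/2 + 1 = (2-(n:ℝ))/2 := by ring
    rw [he]
    have hene : (2-(n:ℝ))/2 ≠ 0 := by intro h; nlinarith [h]
    rw [mul_comm, div_mul_cancel₀ _ hene]
  -- rpow algebra
  have h2e : ∀ r : ℝ, 0 < r → (2 / ((n:ℝ)-2)) * r * u1' n r = -(r ^ ((2-(n:ℝ))/2)) := by
    intro r hr
    have hre : r ^ ((2-(n:ℝ))/2) = r * r ^ (-(n:ℝ)/2) := by
      rw [show (2-(n:ℝ))/2 = 1 + (-(n:ℝ)/2) by ring, Real.rpow_add hr, Real.rpow_one]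
    rw [hre]; unfold u1'; field_simp; ring
  have h3e : ∀ r : ℝ, 0 < r → (2 / ((n:ℝ)-2)) * r * u2' n r = -(2 * r ^ (2-(n:ℝ))) := by
    intro r hr
    have hre : r ^ ((2:ℝ)-(n:ℝ)) = r * r ^ (1-(n:ℝ)) := by
      rw [show (2:ℝ)-(n:ℝ) = 1 + (1-(n:ℝ)) by ring, Real.rpow_add hr, Real.rpow_one]
    rw [hre]; unfold u2'; field_simp; ring
  refine ⟨1 + r₀ ^ ((2-(n:ℝ))/2) + 2 * r₀ ^ (2-(n:ℝ)), by positivity, ?_⟩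
  intro α hα r hr
  have hp1 : (0:ℝ) ≤ r₀ ^ ((2-(n:ℝ))/2) := Real.rpow_nonneg hr₀.le _
  have hp2 : (0:ℝ) ≤ r₀ ^ (2-(n:ℝ)) := Real.rpow_nonneg hr₀.le _
  rcases le_or_gt r r₀ with hcase | hcase
  · -- inner region
    have hwr : w n ζ r = u1' n r := by simp [w, hζone r hcase]
    have hI0 := hIle r₀ hr₀
    rw [uA, hsplit r hr hcase, hwr, h2e r hr]
    linarith
  · -- outer region
    have hIr := hIle r hr
    have hbound : -(r₀ ^ ((2-(n:ℝ))/2) + 2 * r₀ ^ (2-(n:ℝ)))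
        ≤ (2 / ((n:ℝ)-2)) * r * w n ζ r := by
      have hge := hwge r hr
      have hc : (0:ℝ) ≤ 2 / ((n:ℝ)-2) * r := by positivity
      have h1 : (2/((n:ℝ)-2)) * r * (u1' n r + u2' n r)
          ≤ (2/((n:ℝ)-2)) * r * w n ζ r := mul_le_mul_of_nonneg_left hge hc
      have hexp : (2/((n:ℝ)-2)) * r * (u1' n r + u2' n r)
          = (2/((n:ℝ)-2)) * r * u1' n r + (2/((n:ℝ)-2)) * r * u2' n r := by ring
      have h4 : r ^ ((2-(n:ℝ))/2) ≤ r₀ ^ ((2-(n:ℝ))/2) :=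
        Real.rpow_le_rpow_of_nonpos hr₀ hcase.le (by linarith)
      have h5 : r ^ ((2:ℝ)-(n:ℝ)) ≤ r₀ ^ ((2:ℝ)-(n:ℝ)) :=
        Real.rpow_le_rpow_of_nonpos hr₀ hcase.le (by linarith)
      rw [hexp, h2e r hr, h3e r hr] at h1
      linarith
    rw [uA]
    linarith
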